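/- Let 𝒞 be a polyhedral complex in ℝ^r and let τ₁, …, τ_n ∈ 𝒞. Then the set of polyhedra of 𝒞 containing all the τ_i is either empty or has a unique smallest element σ with respect to the face relation; moreover in the latter case the intersection of the polyhedral stars Ω_{τ₁} ∩ ⋯ ∩ Ω_{τ_n} equals Ω_σ. -/

import Mathlib

open Set

noncomputable section

abbrev Vec (r : ℕ) : Type := Fin r → ℝ

/-- A (convex) polyhedron in `ℝ^r`: a finite intersection of closed half-spaces. -/
def IsPolyhedron {r : ℕ} (σ : Set (Vec r)) : Prop :=
  ∃ (n : ℕ) (f : Fin n → (Vec r →ₗ[ℝ] ℝ)) (c : Fin n → ℝ),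
    σ = {x | ∀ i, f i x ≤ c i}

/-- `τ` is a face of `σ`: either `σ` itself, or the subset of `σ` where a linear
functional bounded above on `σ` attains a given bound. -/
def IsFaceOf {r : ℕ} (τ σ : Set (Vec r)) : Prop :=
  τ = σ ∨ ∃ (g : Vec r →ₗ[ℝ] ℝ) (c : ℝ),
    (∀ x ∈ σ, g x ≤ c) ∧ τ = {x ∈ σ | g x = c}

/-- A polyhedral complex in `ℝ^r`: a finite set of convex polyhedra, closed under
taking faces, such that the intersection of any two members is a face of both. -/
structure PolyComplex (r : ℕ) where
  polys : Set (Set (Vec r))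
  finite : polys.Finite
  poly_mem : ∀ σ ∈ polys, IsPolyhedron σ
  face_mem : ∀ σ ∈ polys, ∀ τ, IsFaceOf τ σ → τ ∈ polys
  inter_face : ∀ σ ∈ polys, ∀ τ ∈ polys, IsFaceOf (σ ∩ τ) σ

/-- The support of a polyhedral complex. -/
def PolyComplex.support {r : ℕ} (C : PolyComplex r) : Set (Vec r) :=
  ⋃ σ ∈ C.polys, σ

/-- The relative interior of a polyhedron: the polyhedron minus all its proper faces. -/
def relint {r : ℕ} (σ : Set (Vec r)) : Set (Vec r) :=
  {x ∈ σ | ∀ τ, IsFaceOf τ σ → τ ≠ σ → x ∉ τ}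

/-- The polyhedral star of `σ` in `C`: the union of the relative interiors of all
members of `C` having `σ` as a face. -/
def polyStar {r : ℕ} (C : PolyComplex r) (σ : Set (Vec r)) : Set (Vec r) :=
  ⋃ τ ∈ {τ ∈ C.polys | IsFaceOf σ τ}, relint τ

/-- `Ω` is an open subset of the support of `C` (subspace topology). -/
def OpenInSupport {r : ℕ} (C : PolyComplex r) (Ω : Set (Vec r)) : Prop :=
  ∃ U : Set (Vec r), IsOpen U ∧ Ω = U ∩ C.support

/-- `S` is star shaped with centre `z`. -/
def StarShapedWith {r : ℕ} (z : Vec r) (S : Set (Vec r)) : Prop :=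
  ∀ x ∈ S, ∀ t ∈ Icc (0 : ℝ) 1, z + t • (x - z) ∈ S

/-- `Ω` is polyhedrally star shaped with centre `z`: there is a polyhedral complex `D`
such that `Ω` is an open subset of `|D|` and `σ ∩ Ω` is star shaped with centre `z`
for every maximal `σ ∈ D`. -/
def PolyStarShaped {r : ℕ} (z : Vec r) (Ω : Set (Vec r)) : Prop :=
  ∃ D : PolyComplex r, OpenInSupport D Ω ∧
    ∀ σ ∈ D.polys, (∀ τ ∈ D.polys, IsFaceOf σ τ → τ = σ) →
      StarShapedWith z (σ ∩ Ω)

lemma IsFaceOf.subset {r : ℕ} {τ σ : Set (Vec r)} (h : IsFaceOf τ σ) : τ ⊆ σ := by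
  rcases h with rfl | ⟨g, c, _, rfl⟩
  · exact subset_rfl
  · exact fun x hx => hx.1

lemma face_of_subset {r : ℕ} (C : PolyComplex r) {A B : Set (Vec r)}
    (hA : A ∈ C.polys) (hB : B ∈ C.polys) (h : A ⊆ B) : IsFaceOf A B := by
  have := C.inter_face B hB A hA
  rwa [Set.inter_eq_right.mpr h] at this

lemma inter_mem {r : ℕ} (C : PolyComplex r) {A B : Set (Vec r)}
    (hA : A ∈ C.polys) (hB : B ∈ C.polys) : A ∩ B ∈ C.polys :=
  C.face_mem A hA _ (C.inter_face A hA B hB)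

lemma sInter_mem {r : ℕ} (C : PolyComplex r) {S : Set (Set (Vec r))}
    (hfin : S.Finite) (hsub : S ⊆ C.polys) (hne : S.Nonempty) : ⋂₀ S ∈ C.polys := by
  revert hsub hne
  refine Set.Finite.induction_on
    (motive := fun s _ => s ⊆ C.polys → s.Nonempty → ⋂₀ s ∈ C.polys) S hfin (by simp) ?_
  intro a s ha hs ih hsub hne
  rcases s.eq_empty_or_nonempty with rfl | hsn
  · simpa using hsub (Set.mem_insert a ∅)
  · rw [Set.sInter_insert]
    exact inter_mem C (hsub (Set.mem_insert a s))
      (ih (fun x hx => hsub (Set.mem_insert_of_mem a hx)) hsn)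

lemma relint_eq {r : ℕ} (C : PolyComplex r) {ρ ρ' : Set (Vec r)} {x : Vec r}
    (hρ : ρ ∈ C.polys) (hρ' : ρ' ∈ C.polys)
    (hx : x ∈ relint ρ) (hx' : x ∈ relint ρ') : ρ = ρ' := by
  have h1 : ρ ∩ ρ' = ρ := by
    by_contra hne
    exact hx.2 _ (C.inter_face ρ hρ ρ' hρ') hne ⟨hx.1, hx'.1⟩
  have h2 : ρ' ∩ ρ = ρ' := by
    by_contra hne
    exact hx'.2 _ (C.inter_face ρ' hρ' ρ hρ) hne ⟨hx'.1, hx.1⟩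
  rw [Set.inter_comm] at h2
  rw [← h1, h2]

lemma mem_polyStar {r : ℕ} {C : PolyComplex r} {σ : Set (Vec r)} {x : Vec r} :
    x ∈ polyStar C σ ↔ ∃ ρ, ρ ∈ C.polys ∧ IsFaceOf σ ρ ∧ x ∈ relint ρ := by
  simp [polyStar]
  tauto

/-- Given `τ₁,…,τₙ ∈ 𝒞`, the set of polyhedra of `𝒞` containing all the
`τᵢ` as faces is either empty or has a unique smallest element `σ₀` with respect to
the face relation, and in the latter case `⋂ᵢ Ω_{τᵢ} = Ω_{σ₀}`. -/
theorem polyStar_inter {r n : ℕ} (hn : 0 < n) (C : PolyComplex r)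
    (τ : Fin n → Set (Vec r)) (hτ : ∀ i, τ i ∈ C.polys) :
    {σ | σ ∈ C.polys ∧ ∀ i, IsFaceOf (τ i) σ} = ∅ ∨
    ∃ σ₀,
      (σ₀ ∈ C.polys ∧ (∀ i, IsFaceOf (τ i) σ₀) ∧
        ∀ σ ∈ C.polys, (∀ i, IsFaceOf (τ i) σ) → IsFaceOf σ₀ σ) ∧
      (∀ σ₁, (σ₁ ∈ C.polys ∧ (∀ i, IsFaceOf (τ i) σ₁) ∧
        ∀ σ ∈ C.polys, (∀ i, IsFaceOf (τ i) σ) → IsFaceOf σ₁ σ) → σ₁ = σ₀) ∧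
      (⋂ i, polyStar C (τ i)) = polyStar C σ₀ := by
  set S : Set (Set (Vec r)) := {σ | σ ∈ C.polys ∧ ∀ i, IsFaceOf (τ i) σ} with hS
  rcases S.eq_empty_or_nonempty with hSe | hSne
  · exact Or.inl hSe
  right
  have hSsub : S ⊆ C.polys := fun σ hσ => hσ.1
  have hSfin : S.Finite := C.finite.subset hSsub
  set σ₀ : Set (Vec r) := ⋂₀ S with hσ₀def
  have hσ₀mem : σ₀ ∈ C.polys := sInter_mem C hSfin hSsub hSne
  have hτsub : ∀ i, τ i ⊆ σ₀ := by
    intro i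
    exact Set.subset_sInter fun σ hσ => (hσ.2 i).subset
  have hτface : ∀ i, IsFaceOf (τ i) σ₀ := fun i =>
    face_of_subset C (hτ i) hσ₀mem (hτsub i)
  have hmin : ∀ σ ∈ C.polys, (∀ i, IsFaceOf (τ i) σ) → IsFaceOf σ₀ σ := by
    intro σ hσ hf
    exact face_of_subset C hσ₀mem hσ (Set.sInter_subset_of_mem ⟨hσ, hf⟩)
  refine ⟨σ₀, ⟨hσ₀mem, hτface, hmin⟩, ?_, ?_⟩
  · rintro σ₁ ⟨h1, h2, h3⟩
    have ha : IsFaceOf σ₁ σ₀ := h3 σ₀ hσ₀mem hτface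
    have hb : IsFaceOf σ₀ σ₁ := hmin σ₁ h1 h2
    exact Set.Subset.antisymm ha.subset hb.subset
  · ext x
    simp only [Set.mem_iInter, mem_polyStar]
    constructor
    · intro hx
      obtain ⟨i0⟩ : Nonempty (Fin n) := ⟨⟨0, hn⟩⟩
      obtain ⟨ρ, hρ, hfρ, hxρ⟩ := hx i0
      have hall : ∀ i, IsFaceOf (τ i) ρ := by
        intro i
        obtain ⟨ρ', hρ', hfρ', hxρ'⟩ := hx i
        rwa [relint_eq C hρ' hρ hxρ' hxρ] at hfρ'
      exact ⟨ρ, hρ, hmin ρ hρ hall, hxρ⟩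
    · rintro ⟨ρ, hρ, hfρ, hxρ⟩ i
      refine ⟨ρ, hρ, face_of_subset C (hτ i) hρ ?_, hxρ⟩
      exact (hτsub i).trans hfρ.subset
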